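/- Let U ⊆ ℂ be open and convex, let 0 < δ < 1/4, let ψ : U → ℂ be holomorphic with |ψ(z) − 1| < δ on U, let g be the principal square root of ψ, and let G be a primitive of g on U. Let a, b ∈ U be distinct with [a, b] ⊆ U, set L = |b − a|, and let d be the Euclidean distance from the segment [a, b] to the complement ℂ ∖ U. If d > 4δL, then every point of the Euclidean segment from G(a) to G(b) lies in G(U), and every such point is within Euclidean distance 2δL of the image G([a, b]) of the segment [a, b] under G. -/

import Mathlib

set_option maxHeartbeats 1000000


/-- `g` is the principal square root of `ψ` on `U`: it is holomorphic on `U`, with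
`g² = ψ` and `Re g > 0` on `U`. -/
def IsPrincipalSqrtOn (U : Set ℂ) (ψ g : ℂ → ℂ) : Prop :=
  DifferentiableOn ℂ g U ∧ ∀ z ∈ U, g z ^ 2 = ψ z ∧ 0 < (g z).re

/-- Part (iii) of Lemma 2.5 of the paper, in the planar model: with `ψ`, `g`, `G` as
before on an open convex `U`, `a ≠ b` in `U` with `[a,b] ⊆ U`, `L = |b − a|`, and
`d` the Euclidean distance from the segment `[a,b]` to `ℂ ∖ U` satisfying `d > 4δL`,
every point of the straight segment from `G a` to `G b` lies in `G(U)` and is within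
distance `2δL` of `G([a,b])`. -/
theorem geodesic_segment_exists (U : Set ℂ) (hU : IsOpen U) (hconv : Convex ℝ U)
    (δ : ℝ) (hδ0 : 0 < δ) (hδ : δ < 1 / 4) (ψ g G : ℂ → ℂ)
    (hψ : DifferentiableOn ℂ ψ U)
    (hψb : ∀ z ∈ U, ‖ψ z - 1‖ < δ)
    (hg : IsPrincipalSqrtOn U ψ g)
    (hG : ∀ z ∈ U, HasDerivAt G (g z) z)
    (a b : ℂ) (ha : a ∈ U) (hb : b ∈ U) (hab : a ≠ b)
    (hseg : segment ℝ a b ⊆ U)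
    (L d : ℝ) (hL : L = ‖b - a‖)
    (hd : d = ⨅ x : segment ℝ a b, Metric.infDist (x : ℂ) Uᶜ)
    (hdL : d > 4 * δ * L) :
    ∀ w ∈ segment ℝ (G a) (G b),
      w ∈ G '' U ∧ Metric.infDist w (G '' segment ℝ a b) ≤ 2 * δ * L := by
  -- `|g z - 1| ≤ δ` on `U`.
  have hg1 : ∀ z ∈ U, ‖g z - 1‖ ≤ δ := by
    intro z hz
    obtain ⟨hg2, hgre⟩ := hg.2 z hz
    have h1 : (1 : ℝ) ≤ ‖g z + 1‖ := by
      have : (1 : ℝ) ≤ (g z + 1).re := by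
        simp only [Complex.add_re, Complex.one_re]; linarith
      exact this.trans (Complex.re_le_norm _)
    have key : ‖g z - 1‖ * ‖g z + 1‖ = ‖ψ z - 1‖ := by
      rw [← norm_mul]
      congr 1
      rw [← hg2]; ring
    have := hψb z hz
    have h2 : ‖g z - 1‖ ≤ ‖g z - 1‖ * ‖g z + 1‖ :=
      le_mul_of_one_le_right (norm_nonneg _) h1
    calc ‖g z - 1‖ = ‖g z - 1‖ := rfl
      _ ≤ ‖ψ z - 1‖ := key ▸ h2
      _ ≤ δ := (hψb z hz).le
  -- Mean value estimate on convex subsets of `U`.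
  have key : ∀ s : Set ℂ, s ⊆ U → Convex ℝ s → ∀ x ∈ s, ∀ y ∈ s,
      ‖G y - G x - (y - x)‖ ≤ δ * ‖y - x‖ := by
    intro s hsU hs x hx y hy
    have hmvt := hs.norm_image_sub_le_of_norm_hasFDerivWithin_le
      (f := fun z => G z - z)
      (f' := fun z => ContinuousLinearMap.smulRight (1 : ℂ →L[ℂ] ℂ) (g z - 1))
      (fun z hz => by
        have : HasDerivAt (fun z => G z - z) (g z - 1) z :=
          (hG z (hsU hz)).sub (hasDerivAt_id z)
        exact (hasDerivAt_iff_hasFDerivAt.1 this).hasFDerivWithinAt)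
      (fun z hz => by
        have h1 : ‖(1 : ℂ →L[ℂ] ℂ)‖ = 1 := by
          rw [ContinuousLinearMap.one_def, ContinuousLinearMap.norm_id]
        rw [ContinuousLinearMap.norm_smulRight_apply, h1, one_mul]
        exact hg1 z (hsU hz))
      hx hy
    have heq : (G y - y) - (G x - x) = G y - G x - (y - x) := by ring
    simpa [heq] using hmvt
  have hLpos : 0 < L := by
    rw [hL]
    exact norm_pos_iff.mpr (sub_ne_zero.2 (Ne.symm hab))
  have hLnorm : ‖b - a‖ = L := by rw [hL]
  intro w hw
  rw [segment_eq_image'] at hw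
  obtain ⟨t, ⟨ht0, ht1⟩, rfl⟩ := hw
  set zt : ℂ := a + t • (b - a) with hzt_def
  have hzt_mem : zt ∈ segment ℝ a b := by
    rw [segment_eq_image']
    exact ⟨t, ⟨ht0, ht1⟩, rfl⟩
  have hztU : zt ∈ U := hseg hzt_mem
  -- the two basic estimates
  have hA : ‖G b - G a - (b - a)‖ ≤ δ * L := by
    have := key (segment ℝ a b) hseg (convex_segment a b) a
      (left_mem_segment ℝ a b) b (right_mem_segment ℝ a b)
    rwa [hLnorm] at this
  have hB : ‖G zt - G a - t • (b - a)‖ ≤ δ * (t * L) := by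
    have := key (segment ℝ a b) hseg (convex_segment a b) a
      (left_mem_segment ℝ a b) zt hzt_mem
    have hsub : zt - a = t • (b - a) := by rw [hzt_def]; ring_nf
    rw [hsub, norm_smul, Real.norm_eq_abs, abs_of_nonneg ht0, hLnorm] at this
    exact this
  set w := G a + t • (G b - G a) with hw_def
  have hwz : ‖w - G zt‖ ≤ 2 * δ * L := by
    have heq : w - G zt
        = t • (G b - G a - (b - a)) - (G zt - G a - t • (b - a)) := by
      rw [hw_def]
      simp only [smul_sub]
      ring
    rw [heq]
    calc ‖t • (G b - G a - (b - a)) - (G zt - G a - t • (b - a))‖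
        ≤ ‖t • (G b - G a - (b - a))‖ + ‖G zt - G a - t • (b - a)‖ := norm_sub_le _ _
      _ ≤ t * (δ * L) + δ * (t * L) := by
          refine add_le_add ?_ hB
          rw [norm_smul, Real.norm_eq_abs, abs_of_nonneg ht0]
          exact mul_le_mul_of_nonneg_left hA ht0
      _ ≤ 2 * δ * L := by nlinarith [mul_nonneg (mul_nonneg hδ0.le hLpos.le) (sub_nonneg.2 ht1)]
  constructor
  · -- `w ∈ G '' U` via quantitative surjectivity on a ball around `zt`.
    set ε : ℝ := 3 * δ * L with hε_def
    have hε0 : 0 ≤ ε := by positivity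
    -- the closed ball is inside `U`
    have hball : Metric.closedBall zt ε ⊆ U := by
      intro y hy
      by_contra hyU
      have hyc : y ∈ Uᶜ := hyU
      have h1 : Metric.infDist zt Uᶜ ≤ dist zt y := Metric.infDist_le_dist_of_mem hyc
      have h2 : d ≤ Metric.infDist zt Uᶜ := by
        rw [hd]
        have hbdd : BddBelow (Set.range fun x : segment ℝ a b =>
            Metric.infDist (x : ℂ) Uᶜ) :=
          ⟨0, by rintro r ⟨x, rfl⟩; exact Metric.infDist_nonneg⟩
        exact ciInf_le hbdd (⟨zt, hzt_mem⟩ : segment ℝ a b)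
      have h3 : dist zt y ≤ ε := by
        rw [dist_comm]; exact Metric.mem_closedBall.1 hy
      have : d ≤ 3 * δ * L := h2.trans (h1.trans h3)
      nlinarith
    -- the approximation property
    have hApprox : ApproximatesLinearOn G
        ((ContinuousLinearEquiv.refl ℂ ℂ : ℂ ≃L[ℂ] ℂ) : ℂ →L[ℂ] ℂ)
        (Metric.closedBall zt ε) δ.toNNReal := by
      intro x hx y hy
      have hk := key (Metric.closedBall zt ε) hball (convex_closedBall zt ε) y hy x hx
      have hco : ((δ.toNNReal : ℝ)) = δ := Real.coe_toNNReal δ hδ0.le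
      simp only [ContinuousLinearEquiv.coe_refl, ContinuousLinearMap.id_apply, hco]
      exact hk
    have hsurj := hApprox.surjOn_closedBall_of_nonlinearRightInverse
      (ContinuousLinearEquiv.toNonlinearRightInverse (ContinuousLinearEquiv.refl ℂ ℂ))
      hε0 Set.Subset.rfl
    have hnn : ((ContinuousLinearEquiv.toNonlinearRightInverse
        (ContinuousLinearEquiv.refl ℂ ℂ)).nnnorm : ℝ) = 1 := by
      simp [ContinuousLinearEquiv.toNonlinearRightInverse]
    have hwmem : w ∈ Metric.closedBall (G zt)
        ((((ContinuousLinearEquiv.toNonlinearRightInverse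
          (ContinuousLinearEquiv.refl ℂ ℂ)).nnnorm : ℝ)⁻¹ - δ.toNNReal) * ε) := by
      rw [Metric.mem_closedBall, dist_eq_norm, hnn]
      have hco : ((δ.toNNReal : ℝ)) = δ := Real.coe_toNNReal δ hδ0.le
      rw [hco, inv_one]
      calc ‖w - G zt‖ ≤ 2 * δ * L := hwz
        _ ≤ (1 - δ) * ε := by rw [hε_def]; nlinarith
    obtain ⟨x, hx, hGx⟩ := hsurj hwmem
    exact ⟨x, hball hx, hGx⟩
  · -- distance bound
    have : Metric.infDist w (G '' segment ℝ a b) ≤ dist w (G zt) :=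
      Metric.infDist_le_dist_of_mem (Set.mem_image_of_mem G hzt_mem)
    rw [dist_eq_norm] at this
    exact this.trans hwz
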